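/- arXiv:1703.07319 — 3 statements merged into one kernel-verified Lean document; each statement's English description precedes it below -/
import Mathlib

section
/- Let 𝕂 be a field and C a 𝕂-linear category admitting a dominating family {V_i}_{i∈I} of simple objects. Then for all objects V, W of C, the 𝕂-linear map ⊕_{i∈I} Hom(V, V_i) ⊗_𝕂 Hom(V_i, W) → Hom(V, W) defined on each direct summand by f ⊗ g ↦ g ∘ f is an isomorphism of 𝕂-vector spaces (the direct sum has only finitely many nonzero summands). -/
open CategoryTheory

/-- An object `U` of a `𝕂`-linear category is *simple* if its endomorphism space is
one-dimensional over `𝕂`, spanned by the identity. -/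
def IsSimpleObject (𝕂 : Type*) [Field 𝕂] {C : Type*} [Category C]
    [Preadditive C] [Linear 𝕂 C] (U : C) : Prop :=
  𝟙 U ≠ 0 ∧ ∀ f : U ⟶ U, ∃ c : 𝕂, f = c • 𝟙 U

/-- A family `{V i}_{i ∈ I}` of objects of a `𝕂`-linear category is a *dominating family of
simple objects* if each `V i` is simple, `Hom(V i, V j) = 0` for `i ≠ j`, and every object `X`
admits finitely many morphisms `α k : V (ι k) ⟶ X`, `β k : X ⟶ V (ι k)` with
`𝟙 X = ∑ k, β k ≫ α k`. -/
structure IsDominatingFamily (𝕂 : Type*) [Field 𝕂] {C : Type*} [Category C]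
    [Preadditive C] [Linear 𝕂 C] {I : Type*} (V : I → C) : Prop where
  simple : ∀ i, IsSimpleObject 𝕂 (V i)
  hom_eq_zero : ∀ ⦃i j : I⦄, i ≠ j → ∀ f : V i ⟶ V j, f = 0
  dominates : ∀ X : C, ∃ (n : ℕ) (ι : Fin n → I) (α : ∀ k, V (ι k) ⟶ X)
      (β : ∀ k, X ⟶ V (ι k)), 𝟙 X = ∑ k, β k ≫ α k

open TensorProduct DirectSum in
/-- If a `𝕂`-linear category admits a dominating family `{V i}_{i ∈ I}` of simple objects,
then for all objects `X`, `W` the `𝕂`-linear map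
`⊕_{i ∈ I} Hom(X, V i) ⊗[𝕂] Hom(V i, W) → Hom(X, W)` given on each summand by
`f ⊗ g ↦ g ∘ f` is an isomorphism of `𝕂`-vector spaces. -/
theorem stmt_2 {𝕂 : Type*} [Field 𝕂] {C : Type*} [Category C]
    [Preadditive C] [Linear 𝕂 C] {I : Type*} [DecidableEq I] {V : I → C}
    (hV : IsDominatingFamily 𝕂 V) (X W : C) :
    Function.Bijective
      (DirectSum.toModule 𝕂 I (X ⟶ W) (fun i =>
        TensorProduct.lift (LinearMap.mk₂ 𝕂
          (fun (f : X ⟶ V i) (g : V i ⟶ W) => f ≫ g)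
          (by intros; simp) (by intros; simp) (by intros; simp) (by intros; simp))) :
        (⨁ i : I, (X ⟶ V i) ⊗[𝕂] (V i ⟶ W)) →ₗ[𝕂] (X ⟶ W)) := by
  classical
  obtain ⟨n, ι, α, β, hid⟩ := hV.dominates X
  set L : ∀ i : I, (X ⟶ V i) ⊗[𝕂] (V i ⟶ W) →ₗ[𝕂] (X ⟶ W) := fun i =>
    TensorProduct.lift (LinearMap.mk₂ 𝕂
      (fun (f : X ⟶ V i) (g : V i ⟶ W) => f ≫ g)
      (by intros; simp) (by intros; simp) (by intros; simp) (by intros; simp)) with hL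
  -- the candidate inverse
  set Φ : (X ⟶ W) →ₗ[𝕂] (⨁ i : I, (X ⟶ V i) ⊗[𝕂] (V i ⟶ W)) :=
    { toFun := fun h => ∑ k, DirectSum.lof 𝕂 I
        (fun i => (X ⟶ V i) ⊗[𝕂] (V i ⟶ W)) (ι k) (β k ⊗ₜ (α k ≫ h))
      map_add' := by
        intro a b
        simp [Preadditive.comp_add, TensorProduct.tmul_add, Finset.sum_add_distrib]
      map_smul' := by
        intro c a
        simp [Linear.comp_smul, TensorProduct.tmul_smul, Finset.smul_sum] } with hΦ
  -- key lemma: move a morphism between the two tensor factors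
  have key : ∀ (i j : I) (u : V j ⟶ V i) (b : X ⟶ V j) (g : V i ⟶ W),
      (DirectSum.lof 𝕂 I (fun i => (X ⟶ V i) ⊗[𝕂] (V i ⟶ W)) j) (b ⊗ₜ (u ≫ g)) =
      (DirectSum.lof 𝕂 I (fun i => (X ⟶ V i) ⊗[𝕂] (V i ⟶ W)) i) ((b ≫ u) ⊗ₜ g) := by
    intro i j u b g
    by_cases h : j = i
    · subst h
      obtain ⟨c, hc⟩ := (hV.simple j).2 u
      subst hc
      simp [TensorProduct.tmul_smul, TensorProduct.smul_tmul, Linear.smul_comp,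
        Linear.comp_smul]
    · rw [hV.hom_eq_zero h u]
      simp
  rw [Function.bijective_iff_has_inverse]
  refine ⟨Φ, ?_, ?_⟩
  · -- left inverse: Φ ∘ T = id
    intro x
    have : (Φ ∘ₗ DirectSum.toModule 𝕂 I (X ⟶ W) L) = LinearMap.id := by
      refine DirectSum.linearMap_ext 𝕂 fun i => TensorProduct.ext' fun f g => ?_
      simp only [LinearMap.comp_apply, DirectSum.toModule_lof, LinearMap.id_comp]
      have hLfg : L i (f ⊗ₜ g) = f ≫ g := by simp [hL]
      rw [hLfg]
      show ∑ k, DirectSum.lof 𝕂 I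
          (fun i => (X ⟶ V i) ⊗[𝕂] (V i ⟶ W)) (ι k) (β k ⊗ₜ (α k ≫ (f ≫ g))) =
        DirectSum.lof 𝕂 I (fun i => (X ⟶ V i) ⊗[𝕂] (V i ⟶ W)) i (f ⊗ₜ g)
      have : ∀ k, DirectSum.lof 𝕂 I
          (fun i => (X ⟶ V i) ⊗[𝕂] (V i ⟶ W)) (ι k) (β k ⊗ₜ (α k ≫ (f ≫ g))) =
          DirectSum.lof 𝕂 I (fun i => (X ⟶ V i) ⊗[𝕂] (V i ⟶ W)) i
            ((β k ≫ α k ≫ f) ⊗ₜ g) := by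
        intro k
        rw [← Category.assoc (α k) f g, key i (ι k) (α k ≫ f) (β k) g]
      rw [Finset.sum_congr rfl fun k _ => this k]
      rw [← map_sum, ← TensorProduct.sum_tmul]
      congr 1
      congr 1
      calc ∑ k, β k ≫ α k ≫ f = (∑ k, β k ≫ α k) ≫ f := by
            simp [Preadditive.sum_comp]
        _ = f := by rw [← hid, Category.id_comp]
    exact congrFun (congrArg (fun F => F.toFun) this) x
  · -- right inverse: T ∘ Φ = id
    intro h
    simp only [hΦ, LinearMap.coe_mk, AddHom.coe_mk, map_sum, DirectSum.toModule_lof]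
    have : ∀ k, L (ι k) (β k ⊗ₜ (α k ≫ h)) = β k ≫ α k ≫ h := by
      intro k; simp [hL]
    rw [Finset.sum_congr rfl fun k _ => this k]
    calc ∑ k, β k ≫ α k ≫ h = (∑ k, β k ≫ α k) ≫ h := by simp [Preadditive.sum_comp]
      _ = h := by rw [← hid, Category.id_comp]
end

section
/- Let 𝕂 be a field and C a 𝕂-linear category admitting a dominating family {V_i}_{i∈I} of simple objects. Fix i ∈ I and an object V of C. Since V_i is simple, for every f : V → V_i and g : V_i → V there is a unique scalar ⟨f, g⟩ ∈ 𝕂 with f ∘ g = ⟨f, g⟩ · id_{V_i}. Then the 𝕂-bilinear pairing Hom(V, V_i) × Hom(V_i, V) → 𝕂, (f, g) ↦ ⟨f, g⟩, is non-degenerate. -/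
open CategoryTheory

/-- Let `{V i}_{i ∈ I}` be a dominating family of simple objects of a `𝕂`-linear category,
fix `i ∈ I` and an object `X`, and let `p : Hom(X, V i) × Hom(V i, X) → 𝕂` be the pairing
characterized by `f ∘ g = p f g • 𝟙 (V i)` (uniqueness coming from simplicity of `V i`).
Then this bilinear pairing is non-degenerate. -/
theorem stmt_3 {𝕂 : Type*} [Field 𝕂] {C : Type*} [Category C]
    [Preadditive C] [Linear 𝕂 C] {I : Type*} {V : I → C}
    (hV : IsDominatingFamily 𝕂 V) (i : I) (X : C)
    (p : (X ⟶ V i) → (V i ⟶ X) → 𝕂)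
    (hp : ∀ (f : X ⟶ V i) (g : V i ⟶ X), g ≫ f = p f g • 𝟙 (V i)) :
    (∀ f : X ⟶ V i, f ≠ 0 → ∃ g : V i ⟶ X, p f g ≠ 0) ∧
    (∀ g : V i ⟶ X, g ≠ 0 → ∃ f : X ⟶ V i, p f g ≠ 0) := by
  obtain ⟨n, ι, α, β, hdom⟩ := hV.dominates X
  constructor
  · intro f hf
    by_contra h
    push_neg at h
    apply hf
    have hgf : ∀ g : V i ⟶ X, g ≫ f = 0 := fun g => by rw [hp, h g, zero_smul]
    calc f = 𝟙 X ≫ f := (Category.id_comp f).symm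
    _ = (∑ k, β k ≫ α k) ≫ f := by rw [hdom]
    _ = ∑ k, β k ≫ (α k ≫ f) := by rw [Preadditive.sum_comp]; simp [Category.assoc]
    _ = 0 := Finset.sum_eq_zero fun k _ => by
        by_cases hk : ι k = i
        · subst hk
          rw [hgf (α k), Limits.comp_zero]
        · rw [hV.hom_eq_zero hk (α k ≫ f), Limits.comp_zero]
  · intro g hg
    by_contra h
    push_neg at h
    apply hg
    have hgf : ∀ f : X ⟶ V i, g ≫ f = 0 := fun f => by rw [hp, h f, zero_smul]
    calc g = g ≫ 𝟙 X := (Category.comp_id g).symm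
    _ = g ≫ ∑ k, β k ≫ α k := by rw [hdom]
    _ = ∑ k, (g ≫ β k) ≫ α k := by rw [Preadditive.comp_sum]; simp [Category.assoc]
    _ = 0 := Finset.sum_eq_zero fun k _ => by
        by_cases hk : ι k = i
        · subst hk
          rw [hgf (β k), Limits.zero_comp]
        · rw [hV.hom_eq_zero (Ne.symm hk) (g ≫ β k), Limits.zero_comp]
end

section
/- (Fusion formula.) Let 𝕂 be a field and C a 𝕂-linear category admitting a dominating family {V_i}_{i∈I} of simple objects, and let V be an object of C. Suppose that for each i in the (finite) set of indices with Hom(V_i, V) ≠ 0 we are given a basis (f_i)_1, …, (f_i)_{n_i} of Hom(V, V_i) and morphisms (g_i)^1, …, (g_i)^{n_i} in Hom(V_i, V) satisfying (f_i)_h ∘ (g_i)^k = δ_h^k · id_{V_i} for all h, k. Then id_V = Σ_{i} Σ_{j=1}^{n_i} (g_i)^j ∘ (f_i)_j. -/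
open CategoryTheory

/-- **Fusion formula.** Let `{V i}_{i ∈ I}` be a dominating family of simple objects of a
`𝕂`-linear category and `X` an object. Let `S` be the (finite) set of indices `i` with
`Hom(V i, X) ≠ 0`. Suppose that for each `i` we have a basis `b i 1, …, b i (n i)` of
`Hom(X, V i)` and morphisms `g i 1, …, g i (n i)` in `Hom(V i, X)` with
`(b i h) ∘ (g i k) = δ_h^k • 𝟙 (V i)`. Then `𝟙 X = ∑ i ∈ S, ∑ j, (g i j) ∘ (b i j)`. -/
theorem stmt_4 {𝕂 : Type*} [Field 𝕂] {C : Type*} [Category C]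
    [Preadditive C] [Linear 𝕂 C] {I : Type*} {V : I → C}
    (hV : IsDominatingFamily 𝕂 V) (X : C)
    (S : Finset I) (hS : ∀ i : I, i ∈ S ↔ ∃ g : V i ⟶ X, g ≠ 0)
    (n : I → ℕ) (b : ∀ i : I, Module.Basis (Fin (n i)) 𝕂 (X ⟶ V i))
    (g : ∀ i : I, Fin (n i) → (V i ⟶ X))
    (hg : ∀ (i : I) (h k : Fin (n i)),
      g i k ≫ (b i h : X ⟶ V i) = if h = k then 𝟙 (V i) else 0) :
    𝟙 X = ∑ i ∈ S, ∑ j : Fin (n i), (b i j : X ⟶ V i) ≫ g i j := by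

  set P : X ⟶ X := ∑ i ∈ S, ∑ j : Fin (n i), (b i j : X ⟶ V i) ≫ g i j with hP
  have key : ∀ (i : I) (β : X ⟶ V i), P ≫ β = β := by
    intro i β
    by_cases hi : i ∈ S
    · have hbh : ∀ h : Fin (n i), P ≫ (b i h : X ⟶ V i) = b i h := by
        intro h
        rw [hP, Preadditive.sum_comp]
        rw [Finset.sum_eq_single i]
        · rw [Preadditive.sum_comp]
          simp only [Category.assoc, hg]
          rw [Finset.sum_eq_single h]
          · simp
          · intro k _ hk
            simp [Ne.symm hk]
          · intro hmem; exact absurd (Finset.mem_univ h) hmem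
        · intro j _ hj
          rw [Preadditive.sum_comp]
          apply Finset.sum_eq_zero
          intro k _
          rw [Category.assoc, hV.hom_eq_zero hj (g j k ≫ (b i h : X ⟶ V i)), Limits.comp_zero]
        · intro hmem; exact absurd hi hmem
      conv_lhs => rw [← Module.Basis.sum_repr (b i) β]
      rw [Preadditive.comp_sum]
      simp only [Linear.comp_smul, hbh]
      exact Module.Basis.sum_repr (b i) β
    · have hn : n i = 0 := by
        by_contra hn0
        have hk : Fin (n i) := ⟨0, Nat.pos_of_ne_zero hn0⟩
        have hg0 : g i hk = 0 := by
          by_contra hne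
          exact hi ((hS i).mpr ⟨g i hk, hne⟩)
        have := hg i hk hk
        rw [hg0, Limits.zero_comp, if_pos rfl] at this
        exact (hV.simple i).1 this.symm
      have hβ : β = 0 := by
        have := Module.Basis.sum_repr (b i) β
        rw [← this]
        apply Finset.sum_eq_zero
        intro k _
        exact absurd k.isLt (by omega)
      rw [hβ, Limits.comp_zero]
  obtain ⟨m, ι, α, β, hdom⟩ := hV.dominates X
  have : P = 𝟙 X := by
    calc P = P ≫ 𝟙 X := (Category.comp_id P).symm
    _ = ∑ k, (P ≫ β k) ≫ α k := by
        rw [hdom, Preadditive.comp_sum]; simp [Category.assoc]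
    _ = ∑ k, β k ≫ α k := by simp only [key]
    _ = 𝟙 X := hdom.symm
  exact this.symm
end
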